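/- Every k-rankwise independent family of permutations of {1,...,n} (with k ≤ n) is k-restricted minwise independent. -/

import Mathlib

open Finset Function

private def ins {n j : ℕ} (p : Fin (j + 1)) (z : Fin n) (τ : Fin j → Fin n) :
    Fin (j + 1) → Fin n :=
  Fin.insertNth p z τ

private lemma ins_same {n j : ℕ} (p : Fin (j + 1)) (z : Fin n) (τ : Fin j → Fin n) :
    ins p z τ p = z :=
  Fin.insertNth_apply_same (α := fun _ => Fin n) p z τ

private lemma ins_succAbove {n j : ℕ} (p : Fin (j + 1)) (z : Fin n) (τ : Fin j → Fin n)
    (a : Fin j) : ins p z τ (p.succAbove a) = τ a :=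
  Fin.insertNth_apply_succAbove (α := fun _ => Fin n) p z τ a

private lemma seg_card {j : ℕ} (S : Finset (Fin j))
    (hdc : ∀ a b : Fin j, a ≤ b → b ∈ S → a ∈ S) {a : Fin j} :
    a ∈ S ↔ (a : ℕ) < S.card := by
  constructor
  · intro ha
    have h1 : Finset.Iic a ⊆ S := fun b hb => hdc b a (Finset.mem_Iic.mp hb) ha
    have := Finset.card_le_card h1
    rw [Fin.card_Iic] at this; omega
  · intro ha
    by_contra hna
    have h1 : S ⊆ Finset.Iio a := fun b hb =>
      Finset.mem_Iio.mpr (lt_of_not_ge fun hab => hna (hdc a b hab hb))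
    have := Finset.card_le_card h1
    rw [Fin.card_Iio] at this; omega

private lemma cover {n j : ℕ} (f : Fin n → Fin n) (hf : Injective f) (τ : Fin j → Fin n)
    (z : Fin n) (hz : ∀ a, τ a ≠ z) (hm : StrictMono (f ∘ τ)) :
    ∃ p : Fin (j+1), StrictMono (f ∘ ins p z τ) := by
  classical
  set S : Finset (Fin j) := Finset.univ.filter (fun a => f (τ a) < f z) with hS
  have hdc : ∀ a b : Fin j, a ≤ b → b ∈ S → a ∈ S := by
    intro a b hab hb
    simp only [hS, Finset.mem_filter, Finset.mem_univ, true_and] at hb ⊢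
    exact lt_of_le_of_lt (hm.monotone hab) hb
  have hSc : S.card ≤ j := by
    have := Finset.card_le_card (Finset.subset_univ S); simpa using this
  refine ⟨⟨S.card, Nat.lt_succ_of_le hSc⟩, ?_⟩
  set p : Fin (j+1) := ⟨S.card, Nat.lt_succ_of_le hSc⟩ with hp
  have key : ∀ a : Fin j, f (τ a) < f z ↔ a.castSucc < p := by
    intro a
    have h0 : a.castSucc < p ↔ (a : ℕ) < S.card := Iff.rfl
    rw [h0, ← seg_card S hdc]
    simp [hS]
  have key2 : ∀ a : Fin j, f z < f (τ a) ↔ p ≤ a.castSucc := by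
    intro a
    have hne : f (τ a) ≠ f z := fun h => hz a (hf h)
    rw [← not_lt, ← key a]
    constructor
    · intro h; exact not_lt.mpr h.le
    · intro h; exact lt_of_le_of_ne (not_lt.mp h) (Ne.symm hne)
  intro c c' hlt
  by_cases hc : c = p
  · subst hc
    have hc' : c' ≠ p := ne_of_gt hlt
    obtain ⟨a, ha⟩ := Fin.exists_succAbove_eq hc'
    have h1 : p ≤ a.castSucc := by
      rw [← ha] at hlt
      exact (Fin.lt_succAbove_iff_le_castSucc p a).mp hlt
    show f (ins p z τ p) < f (ins p z τ c')
    rw [← ha, ins_same, ins_succAbove]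
    exact (key2 a).mpr h1
  · obtain ⟨a, ha⟩ := Fin.exists_succAbove_eq hc
    by_cases hc' : c' = p
    · subst hc'
      have h1 : a.castSucc < p := by
        rw [← ha] at hlt
        exact (Fin.succAbove_lt_iff_castSucc_lt p a).mp hlt
      show f (ins p z τ c) < f (ins p z τ p)
      rw [← ha, ins_same, ins_succAbove]
      exact (key a).mpr h1
    · obtain ⟨a', ha'⟩ := Fin.exists_succAbove_eq hc'
      have h1 : a < a' := by
        rw [← ha, ← ha'] at hlt
        exact Fin.succAbove_lt_succAbove_iff.mp hlt
      show f (ins p z τ c) < f (ins p z τ c')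
      rw [← ha, ← ha', ins_succAbove, ins_succAbove]
      exact hm h1

private lemma uniq {n j : ℕ} (f : Fin n → Fin n) (τ : Fin j → Fin n) (z : Fin n)
    (p q : Fin (j+1)) (hp : StrictMono (f ∘ ins p z τ))
    (hq : StrictMono (f ∘ ins q z τ)) : p = q := by
  by_contra hne
  wlog h : q < p generalizing p q
  · exact this q p hq hp (Ne.symm hne) (lt_of_le_of_ne (not_lt.mp h) hne)
  have hq' : (q : ℕ) < j := by
    have := p.isLt; have h2 : (q : ℕ) < (p : ℕ) := h; omega
  set a : Fin j := ⟨q, hq'⟩ with ha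
  have hca : a.castSucc = q := rfl
  have h1 : f (τ a) < f z := by
    have hlt : p.succAbove a < p := (Fin.succAbove_lt_iff_castSucc_lt p a).mpr (hca ▸ h)
    have h2 := hp hlt
    show f (τ a) < f z
    calc f (τ a) = f (ins p z τ (p.succAbove a)) := by rw [ins_succAbove]
      _ < f (ins p z τ p) := h2
      _ = f z := by rw [ins_same]
  have h2 : f z < f (τ a) := by
    have hlt : q < q.succAbove a := (Fin.lt_succAbove_iff_le_castSucc q a).mpr (le_of_eq hca.symm)
    have h3 := hq hlt
    calc f z = f (ins q z τ q) := by rw [ins_same]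
      _ < f (ins q z τ (q.succAbove a)) := h3
      _ = f (τ a) := by rw [ins_succAbove]
  exact absurd h2 (not_lt.mpr h1.le)

private lemma restr {n j : ℕ} (f : Fin n → Fin n) (τ : Fin j → Fin n) (z : Fin n)
    (p : Fin (j+1)) (hp : StrictMono (f ∘ ins p z τ)) : StrictMono (f ∘ τ) := by
  have he : f ∘ τ = (f ∘ ins p z τ) ∘ p.succAbove := by
    funext a
    simp [Function.comp, ins_succAbove]
  rw [he]; exact hp.comp (Fin.strictMono_succAbove p)

private lemma inj_ins {n j : ℕ} (τ : Fin j → Fin n) (hτ : Injective τ) (z : Fin n)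
    (hz : ∀ a, τ a ≠ z) (p : Fin (j+1)) : Injective (ins p z τ) := by
  have hval : ∀ c : Fin (j+1), c ≠ p → ∃ a, p.succAbove a = c ∧ ins p z τ c = τ a := by
    intro c hc
    obtain ⟨a, ha⟩ := Fin.exists_succAbove_eq hc
    exact ⟨a, ha, by rw [← ha, ins_succAbove]⟩
  intro c c' h
  by_cases hc : c = p <;> by_cases hc' : c' = p
  · rw [hc, hc']
  · obtain ⟨a, ha, hv⟩ := hval c' hc'
    rw [hc, ins_same, hv] at h
    exact absurd h.symm (hz a)
  · obtain ⟨a, ha, hv⟩ := hval c hc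
    rw [hc', ins_same, hv] at h
    exact absurd h (hz a)
  · obtain ⟨a, ha, hv⟩ := hval c hc
    obtain ⟨a', ha', hv'⟩ := hval c' hc'
    rw [hv, hv'] at h
    rw [← ha, ← ha', hτ h]

private lemma lemA (n k d : ℕ) (hk : k ≤ n) (π : Fin d → Equiv.Perm (Fin n))
    (hrank : ∀ σ : Fin k → Fin n, Function.Injective σ →
      (Finset.univ.filter fun i : Fin d =>
        StrictMono fun a : Fin k => π i (σ a)).card * Nat.factorial k = d) :
    ∀ m j, j + m = k → ∀ τ : Fin j → Fin n, Injective τ →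
      (Finset.univ.filter fun i : Fin d =>
        StrictMono fun a : Fin j => π i (τ a)).card * Nat.factorial j = d := by
  intro m
  induction m with
  | zero =>
    intro j hj τ hτ
    obtain rfl : j = k := by omega
    exact hrank τ hτ
  | succ m ih =>
    intro j hj τ hτ
    classical
    have hjn : j < n := by omega
    obtain ⟨z, hz⟩ : ∃ z : Fin n, ∀ a, τ a ≠ z := by
      by_contra hcon
      push_neg at hcon
      have hsurj : Surjective τ := fun z => by
        obtain ⟨a, ha⟩ := hcon z; exact ⟨a, ha⟩
      have := Fintype.card_le_of_surjective τ hsurj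
      simp at this; omega
    have hins : ∀ p : Fin (j+1), Injective (ins p z τ) :=
      fun p => inj_ins τ hτ z hz p
    have heq : (Finset.univ.filter fun i : Fin d =>
        StrictMono fun a : Fin j => π i (τ a)) =
        (Finset.univ : Finset (Fin (j+1))).biUnion (fun p =>
          Finset.univ.filter fun i : Fin d =>
            StrictMono fun a : Fin (j+1) => π i (ins p z τ a)) := by
      ext i
      simp only [Finset.mem_biUnion, Finset.mem_filter, Finset.mem_univ, true_and]
      constructor
      · intro h
        obtain ⟨p, hp⟩ := cover (π i) (π i).injective τ z hz h
        exact ⟨p, hp⟩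
      · rintro ⟨p, hp⟩
        exact restr (π i) τ z p hp
    have hdisj : ∀ p ∈ (Finset.univ : Finset (Fin (j+1))), ∀ q ∈ Finset.univ, p ≠ q →
        Disjoint (Finset.univ.filter fun i : Fin d =>
            StrictMono fun a : Fin (j+1) => π i (ins p z τ a))
          (Finset.univ.filter fun i : Fin d =>
            StrictMono fun a : Fin (j+1) => π i (ins q z τ a)) := by
      intro p _ q _ hpq
      rw [Finset.disjoint_left]
      intro i hip hiq
      simp only [Finset.mem_filter, Finset.mem_univ, true_and] at hip hiq
      exact hpq (uniq (π i) τ z p q hip hiq)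
    have hcard : ∀ p : Fin (j+1),
        (Finset.univ.filter fun i : Fin d =>
          StrictMono fun a : Fin (j+1) => π i (ins p z τ a)).card
          * Nat.factorial (j+1) = d := by
      intro p
      exact ih (j+1) (by omega) (ins p z τ) (hins p)
    rw [heq, Finset.card_biUnion hdisj]
    set C := fun p : Fin (j+1) => (Finset.univ.filter fun i : Fin d =>
          StrictMono fun a : Fin (j+1) => π i (ins p z τ a)).card with hC
    have hsum : (∑ p : Fin (j+1), C p) * Nat.factorial (j+1) = (j+1) * d := by
      rw [Finset.sum_mul]
      rw [Finset.sum_congr rfl (fun p _ => hcard p)]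
      simp [mul_comm]
    rw [Nat.factorial_succ] at hsum
    have hfin : (∑ p : Fin (j+1), C p) * Nat.factorial j * (j+1) = d * (j+1) := by
      calc (∑ p : Fin (j+1), C p) * Nat.factorial j * (j+1)
          = (∑ p : Fin (j+1), C p) * ((j+1) * Nat.factorial j) := by ring
        _ = (j+1) * d := hsum
        _ = d * (j+1) := by ring
    exact Nat.eq_of_mul_eq_mul_right (Nat.succ_pos j) hfin

theorem stmt_7 (n k d : ℕ) (hk : k ≤ n) (π : Fin d → Equiv.Perm (Fin n))
    (hrank : ∀ σ : Fin k → Fin n, Function.Injective σ →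
      (Finset.univ.filter fun i : Fin d =>
        StrictMono fun a : Fin k => π i (σ a)).card * Nat.factorial k = d) :
    ∀ j, 1 ≤ j → j ≤ k → ∀ X : Finset (Fin n), X.card = j → ∀ x ∈ X,
      (Finset.univ.filter fun i : Fin d => ∀ y ∈ X, π i x ≤ π i y).card * j = d := by
  intro j hj1 hjk X hX x hx
  obtain ⟨m, rfl⟩ : ∃ m, j = m + 1 := ⟨j - 1, by omega⟩
  classical
  set T : Finset (Fin (m+1) → Fin n) :=
    Finset.univ.filter (fun τ => Injective τ ∧ (∀ a, τ a ∈ X) ∧ τ 0 = x) with hT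
  have himXτ : ∀ τ : Fin (m+1) → Fin n, Injective τ → (∀ a, τ a ∈ X) →
      ∀ y ∈ X, ∃ a, τ a = y := by
    intro τ hinj hmem y hy
    have hsub : Finset.univ.image τ ⊆ X := by
      intro b hb
      rw [Finset.mem_image] at hb
      obtain ⟨a, _, rfl⟩ := hb
      exact hmem a
    have hcard : X.card ≤ (Finset.univ.image τ).card := by
      rw [Finset.card_image_of_injective _ hinj, hX]
      simp
    have := Finset.eq_of_subset_of_card_le hsub hcard
    rw [← this] at hy
    rw [Finset.mem_image] at hy
    obtain ⟨a, _, ha⟩ := hy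
    exact ⟨a, ha⟩
  have heq : (Finset.univ.filter fun i : Fin d => ∀ y ∈ X, π i x ≤ π i y) =
      T.biUnion (fun τ => Finset.univ.filter fun i : Fin d =>
        StrictMono fun a : Fin (m+1) => π i (τ a)) := by
    ext i
    simp only [Finset.mem_biUnion, Finset.mem_filter, Finset.mem_univ, true_and, hT]
    constructor
    · intro h
      have himc : (X.image (π i)).card = m + 1 := by
        rw [Finset.card_image_of_injective _ (π i).injective, hX]
      set e := (X.image (π i)).orderEmbOfFin himc with he
      set τ : Fin (m+1) → Fin n := fun a => (π i).symm (e a) with hτ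
      have hcomp : ∀ a, π i (τ a) = e a := fun a => (π i).apply_symm_apply _
      have hτX : ∀ a, τ a ∈ X := by
        intro a
        have h1 := Finset.orderEmbOfFin_mem _ himc a
        rw [Finset.mem_image] at h1
        obtain ⟨y, hy, hye⟩ := h1
        have h2 : τ a = y := by rw [hτ]; simp [he, ← hye]
        rwa [h2]
      have hmono : StrictMono fun a => π i (τ a) := by
        intro a b hab
        show π i (τ a) < π i (τ b)
        rw [hcomp, hcomp]
        exact e.strictMono hab
      have hinj : Injective τ := by
        intro a b hab
        have h3 : e a = e b := by rw [← hcomp, ← hcomp, hab]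
        exact e.injective h3
      have hτ0 : τ 0 = x := by
        have h1 : π i x ≤ π i (τ 0) := h _ (hτX 0)
        have h2 : π i (τ 0) ≤ π i x := by
          rw [hcomp]
          have hxm : π i x ∈ X.image (π i) := Finset.mem_image_of_mem _ hx
          have h0 : e 0 = (X.image (π i)).min'
              (Finset.card_pos.mp (by rw [himc]; omega)) := by
            rw [he]
            exact Finset.orderEmbOfFin_zero himc (Nat.succ_pos m)
          rw [h0]
          exact Finset.min'_le _ _ hxm
        exact (π i).injective (le_antisymm h2 h1)
      exact ⟨τ, ⟨hinj, hτX, hτ0⟩, hmono⟩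
    · rintro ⟨τ, ⟨hinj, hmem, hτ0⟩, hmono⟩
      intro y hy
      obtain ⟨a, rfl⟩ := himXτ τ hinj hmem y hy
      rw [← hτ0]
      exact hmono.monotone (Fin.zero_le a)
  have hdisj : ∀ τ ∈ T, ∀ τ' ∈ T, τ ≠ τ' →
      Disjoint (Finset.univ.filter fun i : Fin d =>
          StrictMono fun a : Fin (m+1) => π i (τ a))
        (Finset.univ.filter fun i : Fin d =>
          StrictMono fun a : Fin (m+1) => π i (τ' a)) := by
    intro τ hτm τ' hτ'm hne
    rw [Finset.disjoint_left]
    intro i hi hi'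
    simp only [Finset.mem_filter, Finset.mem_univ, true_and] at hi hi'
    simp only [hT, Finset.mem_filter, Finset.mem_univ, true_and] at hτm hτ'm
    obtain ⟨hinj, hmem, -⟩ := hτm
    obtain ⟨hinj', hmem', -⟩ := hτ'm
    have himc : (X.image (π i)).card = m + 1 := by
      rw [Finset.card_image_of_injective _ (π i).injective, hX]
    have hu1 : (fun a => π i (τ a)) = (X.image (π i)).orderEmbOfFin himc :=
      Finset.orderEmbOfFin_unique himc (fun a => Finset.mem_image_of_mem _ (hmem a)) hi
    have hu2 : (fun a => π i (τ' a)) = (X.image (π i)).orderEmbOfFin himc :=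
      Finset.orderEmbOfFin_unique himc (fun a => Finset.mem_image_of_mem _ (hmem' a)) hi'
    apply hne
    funext a
    have h4 : π i (τ a) = π i (τ' a) := by
      rw [show π i (τ a) = (fun a => π i (τ a)) a from rfl, hu1]
      rw [show π i (τ' a) = (fun a => π i (τ' a)) a from rfl, hu2]
    exact (π i).injective h4
  have hTcard : T.card = Nat.factorial m := by
    have hXe : (X.erase x).card = m := by
      rw [Finset.card_erase_of_mem hx, hX]
      omega
    have hbij : T.card = Fintype.card (Fin m ↪ {y // y ∈ X.erase x}) := by
      rw [← Finset.card_univ]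
      exact Finset.card_bij'
        (i := fun τ (hτm : τ ∈ T) => (⟨fun b => ⟨τ b.succ, by
          simp only [hT, Finset.mem_filter, Finset.mem_univ, true_and] at hτm
          obtain ⟨hinj, hmem, hτ0⟩ := hτm
          rw [Finset.mem_erase]
          refine ⟨?_, hmem _⟩
          intro hcon
          rw [← hτ0] at hcon
          exact Fin.succ_ne_zero b (hinj hcon)⟩, by
          intro b b' hbb'
          simp only [hT, Finset.mem_filter, Finset.mem_univ, true_and] at hτm
          obtain ⟨hinj, -, -⟩ := hτm
          have hvv := congrArg Subtype.val hbb'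
          exact Fin.succ_injective _ (hinj hvv)⟩ : Fin m ↪ {y // y ∈ X.erase x}))
        (j := fun e _ => fun a => Fin.cases x (fun b => ((e b : {y // y ∈ X.erase x}) : Fin n)) a)
        (hi := fun τ hτm => Finset.mem_univ _)
        (hj := by
          intro e he
          show (fun a => Fin.cases x (fun b => ((e b : {y // y ∈ X.erase x}) : Fin n)) a) ∈ T
          rw [hT, Finset.mem_filter]
          refine ⟨Finset.mem_univ _, ?_, ?_, ?_⟩
          · intro a a' haa'
            induction a using Fin.cases with
            | zero =>
              induction a' using Fin.cases with
              | zero => rfl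
              | succ b' =>
                simp only [Fin.cases_zero, Fin.cases_succ] at haa'
                have hne := (Finset.mem_erase.mp (e b').2).1
                exact absurd haa'.symm hne
            | succ b =>
              induction a' using Fin.cases with
              | zero =>
                simp only [Fin.cases_zero, Fin.cases_succ] at haa'
                have hne := (Finset.mem_erase.mp (e b).2).1
                exact absurd haa' hne
              | succ b' =>
                simp only [Fin.cases_succ] at haa'
                have hee : e b = e b' := Subtype.ext haa'
                rw [e.injective hee]
          · intro a
            induction a using Fin.cases with
            | zero => simpa using hx
            | succ b => simpa using (Finset.mem_erase.mp (e b).2).2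
          · simp)
        (left_inv := by
          intro τ hτm
          simp only [hT, Finset.mem_filter, Finset.mem_univ, true_and] at hτm
          obtain ⟨-, -, hτ0⟩ := hτm
          funext a
          induction a using Fin.cases with
          | zero => simpa using hτ0.symm
          | succ b => simp; rfl)
        (right_inv := by
          intro e he
          ext b
          simp)
    rw [hbij, Fintype.card_embedding_eq, Fintype.card_coe, hXe, Fintype.card_fin,
      Nat.descFactorial_self]
  have hcardτ : ∀ τ ∈ T, (Finset.univ.filter fun i : Fin d =>
      StrictMono fun a : Fin (m+1) => π i (τ a)).card * Nat.factorial (m+1) = d := by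
    intro τ hτm
    simp only [hT, Finset.mem_filter, Finset.mem_univ, true_and] at hτm
    exact lemA n k d hk π hrank (k - (m+1)) (m+1) (by omega) τ hτm.1
  rw [heq, Finset.card_biUnion hdisj]
  have hsum : (∑ τ ∈ T, (Finset.univ.filter fun i : Fin d =>
      StrictMono fun a : Fin (m+1) => π i (τ a)).card) * Nat.factorial (m+1)
      = Nat.factorial m * d := by
    rw [Finset.sum_mul, Finset.sum_congr rfl hcardτ, Finset.sum_const, hTcard, smul_eq_mul]
  rw [Nat.factorial_succ] at hsum
  apply Nat.eq_of_mul_eq_mul_right (Nat.factorial_pos m)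
  calc (∑ τ ∈ T, (Finset.univ.filter fun i : Fin d =>
      StrictMono fun a : Fin (m+1) => π i (τ a)).card) * (m+1) * Nat.factorial m
      = (∑ τ ∈ T, (Finset.univ.filter fun i : Fin d =>
      StrictMono fun a : Fin (m+1) => π i (τ a)).card) * ((m+1) * Nat.factorial m) := by ring
    _ = Nat.factorial m * d := hsum
    _ = d * Nat.factorial m := by ring
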